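/- The hermitian form L over Λ = ℤ[x,x⁻¹] (with involution x ↦ x⁻¹), given by substituting t = x + x⁻¹ into the matrix with rows (1+t+t², t+t², 1+t, t), (t+t², 1+t+t², t, 1+t), (1+t, t, 2, 0), (t, 1+t, 0, 2), is not extended from the integers: there is no integer matrix J and invertible matrix P over Λ with P L P* = J, where P* denotes conjugate transpose. -/

import Mathlib

open Matrix

noncomputable section

/-- The Laurent polynomial ring `Λ = ℤ[x,x⁻¹]` as the group ring `ℤ[ℤ]`. -/
abbrev Lau := AddMonoidAlgebra ℤ ℤ

/-- The monomial `x^d`. -/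
def Xl (d : ℤ) : Lau := AddMonoidAlgebra.single d 1

/-- The involution of `Λ` sending `x` to `x⁻¹`. -/
def conjL (f : Lau) : Lau := AddMonoidAlgebra.ofCoeff (Finsupp.mapDomain (fun d : ℤ => -d) f.coeff)

/-- `t = x + x⁻¹ ∈ Λ`. -/
def tL : Lau := Xl 1 + Xl (-1)

/-- The hermitian matrix `L` over `Λ`, obtained by substituting `t = x + x⁻¹`. -/
def LmatL : Matrix (Fin 4) (Fin 4) Lau :=
  !![1 + tL + tL ^ 2, tL + tL ^ 2, 1 + tL, tL;
     tL + tL ^ 2, 1 + tL + tL ^ 2, tL, 1 + tL;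
     1 + tL, tL, 2, 0;
     tL, 1 + tL, 0, 2]

namespace S19

abbrev GI := Zsqrtd (-1)

def uI : GIˣ := ⟨⟨0,1⟩, ⟨0,-1⟩, by ext <;> simp, by ext <;> simp⟩

def ι (d : ℤ) : GI := ((uI ^ d : GIˣ) : GI)

lemma norm_uI_units : Units.map (Zsqrtd.normMonoidHom (d := -1)) uI = 1 := by
  ext
  simp [uI, Zsqrtd.normMonoidHom, Zsqrtd.norm]

lemma norm_ι (d : ℤ) : Zsqrtd.norm (ι d) = 1 := by
  have h : Zsqrtd.norm (ι d)
      = ((Units.map (Zsqrtd.normMonoidHom (d := -1)) (uI ^ d) : ℤˣ) : ℤ) := by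
    rw [ι, Units.coe_map]; rfl
  rw [h, map_zpow, norm_uI_units, _root_.one_zpow, Units.val_one]

lemma ι_mul_ι_neg (d : ℤ) : ι d * ι (-d) = 1 := by
  rw [ι, ι, ← Units.val_mul, ← _root_.zpow_add, add_neg_cancel, zpow_zero, Units.val_one]

lemma star_ι (d : ℤ) : star (ι d) = ι (-d) := by
  have h1 : ι d * star (ι d) = 1 := by
    have h := (Zsqrtd.norm_eq_mul_conj (ι d)).symm
    rw [norm_ι] at h
    simpa using h
  calc star (ι d) = star (ι d) * (ι d * ι (-d)) := by rw [ι_mul_ι_neg, mul_one]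
    _ = (ι d * star (ι d)) * ι (-d) := by ring
    _ = ι (-d) := by rw [h1, one_mul]


/-- evaluation x ↦ i -/
def ψ : Lau →+* GI :=
  ((AddMonoidAlgebra.lift ℤ GI ℤ) ((Units.coeHom GI).comp (zpowersHom GIˣ uI))).toRingHom

/-- evaluation x ↦ 1 -/
def φ : Lau →+* ℤ :=
  ((AddMonoidAlgebra.lift ℤ ℤ ℤ) 1).toRingHom

lemma ψ_single (d c : ℤ) : ψ (AddMonoidAlgebra.single d c) = c * ι d := by
  show (AddMonoidAlgebra.lift ℤ GI ℤ) _ (AddMonoidAlgebra.single d c) = _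
  rw [AddMonoidAlgebra.lift_single]
  simp [ι, zsmul_eq_mul]

lemma φ_single (d c : ℤ) : φ (AddMonoidAlgebra.single d c) = c := by
  show (AddMonoidAlgebra.lift ℤ ℤ ℤ) _ (AddMonoidAlgebra.single d c) = _
  rw [AddMonoidAlgebra.lift_single]
  simp

lemma conjL_single (d c : ℤ) :
    conjL (AddMonoidAlgebra.single d c) = AddMonoidAlgebra.single (-d) c := by
  show AddMonoidAlgebra.ofCoeff (Finsupp.mapDomain _ (Finsupp.single d c)) = _
  rw [Finsupp.mapDomain_single]; rfl

lemma ψ_conjL (f : Lau) : ψ (conjL f) = star (ψ f) := by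
  induction f using AddMonoidAlgebra.induction_linear with
  | zero => simp [conjL]
  | add f g hf hg =>
      have : conjL (f + g) = conjL f + conjL g := by
          simp only [conjL, AddMonoidAlgebra.coeff_add, Finsupp.mapDomain_add, AddMonoidAlgebra.ofCoeff_add]
      rw [this, map_add, hf, hg, map_add, star_add]
  | single d c =>
      rw [conjL_single, ψ_single, ψ_single, star_mul']
      simp [star_ι]

lemma φ_conjL (f : Lau) : φ (conjL f) = φ f := by
  induction f using AddMonoidAlgebra.induction_linear with
  | zero => simp [conjL]
  | add f g hf hg =>
      have : conjL (f + g) = conjL f + conjL g := by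
          simp only [conjL, AddMonoidAlgebra.coeff_add, Finsupp.mapDomain_add, AddMonoidAlgebra.ofCoeff_add]
      rw [this, map_add, hf, hg, map_add]
  | single d c => rw [conjL_single, φ_single, φ_single]

def lamg : GI := ⟨1, -1⟩

lemma lamg_dvd_iff (w : GI) : lamg ∣ w ↔ (2 : ℤ) ∣ (w.re + w.im) := by
  constructor
  · rintro ⟨u, rfl⟩
    refine ⟨u.im, ?_⟩
    simp [lamg, Zsqrtd.re_mul, Zsqrtd.im_mul]
    ring
  · rintro ⟨k, hk⟩
    refine ⟨⟨w.re - k, k⟩, ?_⟩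
    ext <;> simp [lamg, Zsqrtd.re_mul, Zsqrtd.im_mul] <;> omega

lemma norm_parity (z : GI) : Odd (Zsqrtd.norm z) ↔ Odd (z.re + z.im) := by
  have h : Zsqrtd.norm z - (z.re + z.im) = (z.re - 1) * z.re + (z.im - 1) * z.im := by
    rw [Zsqrtd.norm_def]; ring
  have e1 : Even ((z.re - 1) * z.re) := by
    have := Int.even_mul_succ_self (z.re - 1)
    simpa using this
  have e2 : Even ((z.im - 1) * z.im) := by
    have := Int.even_mul_succ_self (z.im - 1)
    simpa using this
  have : Even (Zsqrtd.norm z - (z.re + z.im)) := by rw [h]; exact e1.add e2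
  rcases this with ⟨m, hm⟩
  constructor
  · rintro ⟨a, ha⟩; exact ⟨a - m, by omega⟩
  · rintro ⟨a, ha⟩; exact ⟨a + m, by omega⟩

lemma lamg_dvd_ι_sub_one (d : ℤ) : lamg ∣ (ι d - 1) := by
  have hodd : Odd ((ι d).re + (ι d).im) := by
    rw [← norm_parity, norm_ι]; exact ⟨0, rfl⟩
  rw [lamg_dvd_iff, Zsqrtd.re_sub, Zsqrtd.im_sub]
  rcases hodd with ⟨a, ha⟩
  have h1 : (1 : GI).re = 1 := rfl
  have h2 : (1 : GI).im = 0 := rfl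
  rw [h1, h2]
  exact ⟨a, by omega⟩

lemma key (f : Lau) : lamg ∣ (ψ f - ((φ f : ℤ) : GI)) := by
  induction f using AddMonoidAlgebra.induction_linear with
  | zero => simp
  | add f g hf hg =>
      have h : ψ (f + g) - ((φ (f + g) : ℤ) : GI)
          = (ψ f - ((φ f : ℤ) : GI)) + (ψ g - ((φ g : ℤ) : GI)) := by
        rw [map_add, map_add]; push_cast; ring
      rw [h]; exact dvd_add hf hg
  | single d c =>
      rw [ψ_single, φ_single]
      have h : (c : GI) * ι d - (c : GI) = (c : GI) * (ι d - 1) := by ring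
      rw [h]
      exact Dvd.dvd.mul_left (lamg_dvd_ι_sub_one d) _

def Amat : Matrix (Fin 4) (Fin 4) ℤ := !![2,1,1,1;1,1,1,2;1,1,0,0;0,0,1,1]
def AinvM : Matrix (Fin 4) (Fin 4) ℤ := !![1,0,-1,-1;-1,0,2,1;0,-1,1,2;0,1,-1,-1]
def AiM : Matrix (Fin 4) (Fin 4) ℤ := !![1,0,0,0;0,1,0,0;1,0,1,0;0,1,0,1]
def L1M : Matrix (Fin 4) (Fin 4) ℤ := !![7,6,3,2;6,7,2,3;3,2,2,0;2,3,0,2]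
def LiM : Matrix (Fin 4) (Fin 4) ℤ := !![1,0,1,0;0,1,0,1;1,0,2,0;0,1,0,2]

lemma hAinvA : AinvM * Amat = 1 := by decide
lemma hAAinv : Amat * AinvM = 1 := by decide
lemma hAAT : Amat * Amatᵀ = L1M := by decide
lemma hAiAiT : AiM * AiMᵀ = LiM := by decide
lemma hAinvAi : AinvM * AiM = !![0,-1,-1,-1;1,1,2,1;1,1,1,2;-1,0,-1,-1] := by decide

lemma ψ_tL : ψ tL = 0 := by
  have h1 : ψ (Xl 1) = ι 1 := by rw [Xl, ψ_single]; simp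
  have h2 : ψ (Xl (-1)) = ι (-1) := by rw [Xl, ψ_single]; simp
  have h3 : ι 1 = ⟨0, 1⟩ := by rw [ι, zpow_one]; rfl
  have h4 : ι (-1) = ⟨0, -1⟩ := by
    have : (uI : GIˣ) ^ (-1 : ℤ) = uI⁻¹ := by rw [_root_.zpow_neg, zpow_one]
    rw [ι, this]; rfl
  rw [tL, map_add, h1, h2, h3, h4]
  ext <;> simp

lemma φ_tL : φ tL = 2 := by
  have h1 : φ (Xl 1) = 1 := by rw [Xl, φ_single]
  have h2 : φ (Xl (-1)) = 1 := by rw [Xl, φ_single]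
  rw [tL, map_add, h1, h2]; norm_num

lemma ψ_LmatL : LmatL.map ψ = LiM.map (fun n : ℤ => (n : GI)) := by
  refine Matrix.ext fun i j => ?_
  fin_cases i <;> fin_cases j <;>
    simp [LmatL, LiM, Matrix.map_apply, map_add, map_pow, _root_.map_one, _root_.map_ofNat, _root_.map_zero, ψ_tL] <;>
    norm_num

lemma φ_LmatL : LmatL.map φ = L1M := by
  refine Matrix.ext fun i j => ?_
  fin_cases i <;> fin_cases j <;>
    simp [LmatL, L1M, Matrix.map_apply, map_add, map_pow, _root_.map_one, _root_.map_ofNat, _root_.map_zero, φ_tL] <;>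
    norm_num

theorem main :
    ¬ ∃ (J : Matrix (Fin 4) (Fin 4) ℤ) (P : Matrix (Fin 4) (Fin 4) Lau),
        IsUnit P.det ∧ P * LmatL * (P.map conjL)ᵀ = J.map (fun z => (z : Lau)) := by
  rintro ⟨J, P, hdet, hP⟩
  set P1 : Matrix (Fin 4) (Fin 4) ℤ := P.map φ with hP1def
  set Qi : Matrix (Fin 4) (Fin 4) GI := P.map ψ with hQidef
  -- apply φ entrywise
  have hZ : P1 * L1M * P1ᵀ = J := by
    have h := congrArg (φ.mapMatrix) hP
    simp only [_root_.map_mul, RingHom.mapMatrix_apply] at h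
    rw [φ_LmatL] at h
    have hconj : ((P.map conjL)ᵀ).map φ = P1ᵀ := by
      rw [Matrix.transpose_map, Matrix.map_map]
      refine congrArg Matrix.transpose ?_
      refine Matrix.ext fun i j => ?_
      exact φ_conjL (P i j)
    have hJ : (J.map (fun z => (z : Lau))).map φ = J := by
      rw [Matrix.map_map]
      refine Matrix.ext fun i j => ?_
      show φ ((J i j : ℤ) : Lau) = J i j
      rw [map_intCast]
      exact Int.cast_id
    rw [hconj, hJ] at h
    exact h
  -- apply ψ entrywise
  have hGIeq : Qi * (LiM.map (fun n : ℤ => (n : GI))) * ((Qi.map star)ᵀ)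
      = J.map (fun n : ℤ => (n : GI)) := by
    have h := congrArg (ψ.mapMatrix) hP
    simp only [_root_.map_mul, RingHom.mapMatrix_apply] at h
    rw [ψ_LmatL] at h
    have hconj : ((P.map conjL)ᵀ).map ψ = (Qi.map star)ᵀ := by
      rw [Matrix.transpose_map, Matrix.map_map, hQidef, Matrix.map_map]
      refine congrArg Matrix.transpose ?_
      refine Matrix.ext fun i j => ?_
      exact ψ_conjL (P i j)
    have hJ : (J.map (fun z => (z : Lau))).map ψ = J.map (fun n : ℤ => (n : GI)) := by
      rw [Matrix.map_map]
      refine Matrix.ext fun i j => ?_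
      exact map_intCast ψ (J i j)
    rw [hconj, hJ] at h
    exact h
  -- invertibility of P1
  have hdet1 : IsUnit P1.det := by
    have h : P1.det = φ P.det := (RingHom.map_det φ P).symm
    rw [h]
    exact hdet.map φ
  haveI : Invertible P1 := P1.invertibleOfIsUnitDet hdet1
  obtain ⟨G, hGdef⟩ : ∃ G : Matrix (Fin 4) (Fin 4) ℤ, G = P1 * Amat := ⟨_, rfl⟩
  obtain ⟨Ginv, hGinvdef⟩ : ∃ X : Matrix (Fin 4) (Fin 4) ℤ, X = AinvM * ⅟P1 := ⟨_, rfl⟩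
  have hGinvG : Ginv * G = 1 := by
    rw [hGinvdef, hGdef, Matrix.mul_assoc, ← Matrix.mul_assoc (⅟P1), invOf_mul_self,
      Matrix.one_mul, hAinvA]
  have hGinvP1 : Ginv * P1 = AinvM := by
    rw [hGinvdef, Matrix.mul_assoc, invOf_mul_self, Matrix.mul_one]
  have hJG : J = G * Gᵀ := by
    rw [hGdef, Matrix.transpose_mul, ← hZ, ← hAAT]
    noncomm_ring
  -- cast to GI
  set κ : Matrix (Fin 4) (Fin 4) ℤ →+* Matrix (Fin 4) (Fin 4) GI :=
    (Int.castRingHom GI).mapMatrix with hκdef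
  have hκapp : ∀ (X : Matrix (Fin 4) (Fin 4) ℤ), κ X = X.map (fun n : ℤ => (n : GI)) := by
    intro X; rfl
  obtain ⟨D, hDdef⟩ : ∃ D : Matrix (Fin 4) (Fin 4) GI, D = κ Ginv * Qi * κ AiM := ⟨_, rfl⟩
  have hstarκ : ∀ (X : Matrix (Fin 4) (Fin 4) ℤ), (κ X).map star = κ X := by
    intro X
    rw [hκapp, Matrix.map_map]
    refine Matrix.ext fun i j => ?_
    show star ((X i j : ℤ) : GI) = ((X i j : ℤ) : GI)
    exact star_intCast _
  have hκT : ∀ (X : Matrix (Fin 4) (Fin 4) ℤ), (κ X)ᵀ = κ (Xᵀ) := by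
    intro X
    rw [hκapp, hκapp, Matrix.transpose_map]
  have hconjκ : ∀ (X : Matrix (Fin 4) (Fin 4) ℤ), (κ X)ᴴ = κ (Xᵀ) := by
    intro X
    rw [Matrix.conjTranspose, hκT, hstarκ]
  have hQiH : (Qi.map star)ᵀ = Qiᴴ := by
    rw [Matrix.conjTranspose, Matrix.transpose_map]
  have hGIeq2 : Qi * κ LiM * Qiᴴ = κ J := by
    rw [hκapp, hκapp, ← hQiH]
    exact hGIeq
  have hDD : D * Dᴴ = 1 := by
    rw [hDdef, Matrix.conjTranspose_mul, Matrix.conjTranspose_mul, hconjκ, hconjκ]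
    calc κ Ginv * Qi * κ AiM * (κ AiMᵀ * (Qiᴴ * κ Ginvᵀ))
        = κ Ginv * (Qi * (κ AiM * κ AiMᵀ) * Qiᴴ) * κ Ginvᵀ := by noncomm_ring
      _ = κ Ginv * (Qi * κ LiM * Qiᴴ) * κ Ginvᵀ := by
            rw [← _root_.map_mul κ AiM AiMᵀ, hAiAiT]
      _ = κ Ginv * κ J * κ Ginvᵀ := by rw [hGIeq2]
      _ = κ (Ginv * J * Ginvᵀ) := by
            rw [← _root_.map_mul κ Ginv J, ← _root_.map_mul]
      _ = κ ((Ginv * G) * (Ginv * G)ᵀ) := by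
            rw [hJG, Matrix.transpose_mul]
            refine congrArg κ ?_
            noncomm_ring
      _ = 1 := by rw [hGinvG, Matrix.transpose_one, Matrix.one_mul, _root_.map_one]
  -- entrywise congruence
  have hQP : ∀ i j, lamg ∣ (Qi i j - κ P1 i j) := by
    intro i j
    have h1 : Qi i j = ψ (P i j) := by rw [hQidef]; rfl
    have h2 : κ P1 i j = ((φ (P i j) : ℤ) : GI) := by rw [hκapp, hP1def]; rfl
    rw [h1, h2]
    exact key (P i j)
  have hDcong : ∀ j, lamg ∣ (D 0 j - κ (AinvM * AiM) 0 j) := by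
    have h1 : κ Ginv * κ P1 * κ AiM = κ (AinvM * AiM) := by
      rw [← _root_.map_mul κ Ginv P1, ← _root_.map_mul, hGinvP1]
    have hmain : D - κ (AinvM * AiM) = κ Ginv * (Qi - κ P1) * κ AiM := by
      rw [hDdef, ← h1]
      noncomm_ring
    intro j
    have h2 : (D - κ (AinvM * AiM)) 0 j = D 0 j - κ (AinvM * AiM) 0 j := rfl
    rw [← h2, hmain, Matrix.mul_apply]
    apply Finset.dvd_sum
    intro k _
    rw [Matrix.mul_apply, Finset.sum_mul]
    apply Finset.dvd_sum
    intro l _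
    exact (((hQP l k).mul_left _).mul_right _)
  -- odd norms at j = 1, 2, 3
  have hodd : ∀ j : Fin 4, (AinvM * AiM) 0 j = -1 → Odd (Zsqrtd.norm (D 0 j)) := by
    intro j hj
    have h := hDcong j
    have h2 : κ (AinvM * AiM) 0 j = ((-1 : ℤ) : GI) := by
      rw [hκapp]
      show (((AinvM * AiM) 0 j : ℤ) : GI) = _
      rw [hj]
    rw [h2, lamg_dvd_iff, Zsqrtd.re_sub, Zsqrtd.im_sub] at h
    have hre : ((-1 : ℤ) : GI).re = -1 := by simp
    have him : ((-1 : ℤ) : GI).im = 0 := by simp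
    rw [hre, him] at h
    rw [norm_parity]
    rcases h with ⟨k, hk⟩
    exact ⟨k - 1, by omega⟩
  -- the sum of norms is 1
  have hsum : Zsqrtd.norm (D 0 0) + Zsqrtd.norm (D 0 1) + Zsqrtd.norm (D 0 2)
      + Zsqrtd.norm (D 0 3) = 1 := by
    have h := congrArg (fun M : Matrix (Fin 4) (Fin 4) GI => M 0 0) hDD
    simp only [Matrix.mul_apply, Matrix.conjTranspose_apply, Matrix.one_apply_eq] at h
    rw [Fin.sum_univ_four] at h
    have hterm : ∀ j : Fin 4, D 0 j * star (D 0 j) = ((Zsqrtd.norm (D 0 j) : ℤ) : GI) :=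
      fun j => (Zsqrtd.norm_eq_mul_conj _).symm
    rw [hterm 0, hterm 1, hterm 2, hterm 3] at h
    have h2 : (((Zsqrtd.norm (D 0 0) + Zsqrtd.norm (D 0 1) + Zsqrtd.norm (D 0 2)
        + Zsqrtd.norm (D 0 3) : ℤ)) : GI) = ((1 : ℤ) : GI) := by
      push_cast
      linear_combination h
    exact Int.cast_injective h2
  -- contradiction
  have hnn : ∀ j : Fin 4, 0 ≤ Zsqrtd.norm (D 0 j) :=
    fun j => Zsqrtd.norm_nonneg (by norm_num) _
  have e1 : (AinvM * AiM) 0 1 = -1 := by decide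
  have e2 : (AinvM * AiM) 0 2 = -1 := by decide
  have e3 : (AinvM * AiM) 0 3 = -1 := by decide
  obtain ⟨a, ha⟩ := hodd 1 e1
  obtain ⟨b, hb⟩ := hodd 2 e2
  obtain ⟨c, hc⟩ := hodd 3 e3
  have := hnn 0; have := hnn 1; have := hnn 2; have := hnn 3
  omega

end S19

/-- The hermitian form `L` over `Λ = ℤ[x,x⁻¹]` is not extended from the integers:
there are no integer matrix `J` and invertible matrix `P` over `Λ` with
`P L P* = J`, where `P*` is the conjugate transpose. -/
theorem stmt_19 :
    ¬ ∃ (J : Matrix (Fin 4) (Fin 4) ℤ) (P : Matrix (Fin 4) (Fin 4) Lau),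
        IsUnit P.det ∧ P * LmatL * (P.map conjL)ᵀ = J.map (fun z => (z : Lau)) :=
  S19.main

end
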